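/- For every n ≥ 0, the number of projections of the partial Brauer monoid 𝒫ℬ_n of rank at most 2 equals I(n+2)/2, where I(k) denotes the k-th involution number. -/

import Mathlib

namespace DiagramDeg

/-- Vertex set of a partition diagram: `inl` = upper row, `inr` = lower (dashed) row. -/
abbrev V (n : ℕ) := Sum (Fin n) (Fin n)

/-- A partition diagram on `n̲ ∪ n̲′`: a set partition, i.e. an equivalence, of the `2n` vertices. -/
abbrev PD (n : ℕ) := Setoid (V n)

/-- Three-row vertex set for the product graph:
`inl` = top row, `inr ∘ inl` = middle row, `inr ∘ inr` = bottom row. -/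
abbrev W (n : ℕ) := Sum (Fin n) (V n)

/-- Embedding of the vertices of the first factor (top and middle rows). -/
def topmid {n : ℕ} : V n → W n := Sum.elim Sum.inl (fun j => Sum.inr (Sum.inl j))

/-- Embedding of the vertices of the second factor (middle and bottom rows). -/
def midbot {n : ℕ} : V n → W n :=
  Sum.elim (fun i => Sum.inr (Sum.inl i)) (fun j => Sum.inr (Sum.inr j))

/-- Embedding of the outer (top and bottom) rows. -/
def outer {n : ℕ} : V n → W n := Sum.elim Sum.inl (fun j => Sum.inr (Sum.inr j))

/-- The edges of the product graph `Π(α,β)`. -/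
def stepRel {n : ℕ} (α β : PD n) : W n → W n → Prop := fun u v =>
  (∃ x y : V n, α.r x y ∧ u = topmid x ∧ v = topmid y) ∨
  (∃ x y : V n, β.r x y ∧ u = midbot x ∧ v = midbot y)

/-- The product `αβ` of partition diagrams: `x, y` lie in the same block of `αβ` iff they are
connected in the product graph. -/
def comp {n : ℕ} (α β : PD n) : PD n :=
  Setoid.comap outer (Relation.EqvGen.setoid (stepRel α β))

/-- The identity partition diagram, with blocks `{i, i′}`. -/
def idPD (n : ℕ) : PD n := Setoid.ker (Sum.elim id id)

/-- The `*` involution of a diagram: interchange dashed and undashed vertices. -/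
def starPD {n : ℕ} (α : PD n) : PD n := Setoid.comap (Sum.elim Sum.inr Sum.inl) α

/-- The rank of a diagram: the number of transversal blocks, i.e. blocks meeting both rows. -/
noncomputable def rank {n : ℕ} (α : PD n) : ℕ :=
  Nat.card {c : Quotient α //
    (∃ i : Fin n, Quotient.mk α (Sum.inl i) = c) ∧
    (∃ j : Fin n, Quotient.mk α (Sum.inr j) = c)}

/-- A projection: `ε² = ε = ε*`. -/
def IsProjection {n : ℕ} (α : PD n) : Prop := comp α α = α ∧ starPD α = α

/-- `ker(α)`: the restriction of `α` to the upper row. -/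
def upperKer {n : ℕ} (α : PD n) : Fin n → Fin n → Prop := fun x y =>
  α.r (Sum.inl x) (Sum.inl y)

/-- Every block has size at most 2 (defining property of the partial Brauer monoid). -/
def BlocksAtMostTwo {n : ℕ} (α : PD n) : Prop :=
  ∀ x y z : V n, α.r x y → α.r x z → x = y ∨ x = z ∨ y = z

/-- Every block has size exactly 2 (defining property of the Brauer monoid). -/
def BlocksExactlyTwo {n : ℕ} (α : PD n) : Prop :=
  BlocksAtMostTwo α ∧ ∀ x : V n, ∃ y : V n, y ≠ x ∧ α.r x y

/-- Position of a vertex in the boundary order `1, …, n, n′, …, 1′` of the rectangle. -/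
def vpos (n : ℕ) : V n → ℕ := Sum.elim (fun i => (i : ℕ)) (fun j => 2 * n - 1 - (j : ℕ))

/-- Planarity: the partition is non-crossing with respect to the boundary order of the
rectangle spanned by the vertices (two blocks never interleave). -/
def IsPlanar {n : ℕ} (α : PD n) : Prop :=
  ¬ ∃ x y z w : V n, α.r x y ∧ α.r z w ∧ ¬ α.r x z ∧
      vpos n x < vpos n z ∧ vpos n z < vpos n y ∧ vpos n y < vpos n w

/-- The number of projections of rank `r` satisfying `pred`. -/
noncomputable def projCount (n : ℕ) (pred : PD n → Prop) (r : ℕ) : ℕ :=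
  Nat.card {α : PD n // pred α ∧ IsProjection α ∧ rank α = r}

/-- A right action of a semigroup (we only use the `Mul`). -/
def IsRAction {S : Type*} {X : Type*} [Mul S] (μ : X → S → X) : Prop :=
  ∀ (x : X) (a b : S), μ (μ x a) b = μ x (a * b)

/-- An action is faithful if distinct elements act distinctly. -/
def IsFaithful {S : Type*} {X : Type*} (μ : X → S → X) : Prop :=
  ∀ a b : S, (∀ x : X, μ x a = μ x b) → a = b

/-- `deg(S)`: the least `m ≥ 1` such that `S` has a faithful action on an `m`-element set,
equivalently embeds in the full transformation monoid `𝒯_m`. -/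
noncomputable def transDeg (S : Type*) [Mul S] : ℕ :=
  sInf {m : ℕ | 1 ≤ m ∧ ∃ μ : Fin m → S → Fin m, IsRAction μ ∧ IsFaithful μ}

/-- `deg′(S)`: the least `m ≥ 1` such that `S` embeds in the partial transformation
monoid `𝒫𝒯_m`, viewed as the monoid of self-maps of `Option (Fin m)` fixing `none`. -/
noncomputable def pTransDeg (S : Type*) [Mul S] : ℕ :=
  sInf {m : ℕ | 1 ≤ m ∧ ∃ μ : Option (Fin m) → S → Option (Fin m),
    IsRAction μ ∧ (∀ a : S, μ none a = none) ∧ IsFaithful μ}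

/-- A right congruence: a right-compatible equivalence. -/
def IsRightCongruence {S : Type*} [Mul S] (σ : Setoid S) : Prop :=
  ∀ a b s : S, σ.r a b → σ.r (a * s) (b * s)

/-- `deg_rc(S)`: the least `m ≥ 1` such that `S` has a faithful right congruence action
(the action on `S/σ` by `[x]·a = [xa]`) of degree `m`. -/
noncomputable def rcDeg (S : Type*) [Monoid S] : ℕ :=
  sInf {m : ℕ | 1 ≤ m ∧ ∃ σ : Setoid S, IsRightCongruence σ ∧
    Nat.card (Quotient σ) = m ∧
    ∀ a b : S, (∀ x : S, Quotient.mk σ (x * a) = Quotient.mk σ (x * b)) → a = b}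

/-- A two-sided congruence, as a relation. -/
def IsTwoSidedCong {S : Type*} [Mul S] (τ : S → S → Prop) : Prop :=
  Equivalence τ ∧ ∀ a b s : S, τ a b → τ (a * s) (b * s) ∧ τ (s * a) (s * b)

/-- Bell numbers: the number of set partitions (equivalence relations) of a `k`-set. -/
noncomputable def bell (k : ℕ) : ℕ := Nat.card (Setoid (Fin k))

/-- Involution numbers: the number of self-inverse permutations of a `k`-set. -/
noncomputable def involNum (k : ℕ) : ℕ :=
  Nat.card {f : Equiv.Perm (Fin k) // ∀ x, f (f x) = x}

/-- Motzkin numbers, via the standard binomial–Catalan formula. -/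
def motzkin (k : ℕ) : ℕ := ∑ i ∈ Finset.range (k / 2 + 1), k.choose (2 * i) * catalan i

end DiagramDeg
namespace DiagramDeg

variable {n : ℕ}

/-- The relation of the candidate projection built from an involution `g` and fixed set `F`. -/
def bRel (g : Fin n → Fin n) (F : Finset (Fin n)) : V n → V n → Prop
  | Sum.inl i, Sum.inl j => i = j ∨ (g i = j ∧ i ≠ j)
  | Sum.inl i, Sum.inr j => i = j ∧ i ∈ F
  | Sum.inr i, Sum.inl j => i = j ∧ i ∈ F
  | Sum.inr i, Sum.inr j => i = j ∨ (g i = j ∧ i ≠ j)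

section bRelLemmas

variable {g : Fin n → Fin n} {F : Finset (Fin n)}

theorem bRel_refl (x : V n) : bRel g F x x := by
  cases x <;> exact Or.inl rfl

theorem bRel_symm (hg : Function.Involutive g) :
    ∀ {x y : V n}, bRel g F x y → bRel g F y x := by
  rintro (i | i) (j | j) h
  · rcases h with rfl | ⟨e, ne⟩
    · exact Or.inl rfl
    · exact Or.inr ⟨by rw [← e, hg], fun h' => ne h'.symm⟩
  · exact ⟨h.1.symm, h.1 ▸ h.2⟩
  · exact ⟨h.1.symm, h.1 ▸ h.2⟩
  · rcases h with rfl | ⟨e, ne⟩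
    · exact Or.inl rfl
    · exact Or.inr ⟨by rw [← e, hg], fun h' => ne h'.symm⟩

theorem chain_chain (hg : Function.Involutive g) {i j k : Fin n}
    (h1 : i = j ∨ (g i = j ∧ i ≠ j)) (h2 : j = k ∨ (g j = k ∧ j ≠ k)) :
    i = k ∨ (g i = k ∧ i ≠ k) := by
  rcases h1 with rfl | ⟨e1, ne1⟩
  · exact h2
  · rcases h2 with rfl | ⟨e2, ne2⟩
    · exact Or.inr ⟨e1, ne1⟩
    · left
      rw [← e2, ← e1, hg]

theorem chain_fix (hg : Function.Involutive g) (hF : ∀ i ∈ F, g i = i) {i j k : Fin n}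
    (h1 : i = j ∨ (g i = j ∧ i ≠ j)) (h2 : j = k ∧ j ∈ F) : i = k ∧ i ∈ F := by
  rcases h1 with rfl | ⟨e1, ne1⟩
  · exact h2
  · exfalso
    apply ne1
    have hj : g j = j := hF j h2.2
    rw [← hj, ← e1, hg]

theorem fix_chain (hg : Function.Involutive g) (hF : ∀ i ∈ F, g i = i) {i j k : Fin n}
    (h1 : i = j ∧ i ∈ F) (h2 : j = k ∨ (g j = k ∧ j ≠ k)) : i = k ∧ i ∈ F := by
  obtain ⟨rfl, hm⟩ := h1
  rcases h2 with rfl | ⟨e2, ne2⟩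
  · exact ⟨rfl, hm⟩
  · exact absurd (by rw [← e2, hF i hm]) ne2

theorem bRel_trans (hg : Function.Involutive g) (hF : ∀ i ∈ F, g i = i) :
    ∀ {x y z : V n}, bRel g F x y → bRel g F y z → bRel g F x z := by
  rintro (i | i) (j | j) (k | k) h1 h2
  · exact chain_chain hg h1 h2
  · exact chain_fix hg hF h1 h2
  · exact Or.inl (h1.1.trans h2.1)
  · exact fix_chain hg hF h1 h2
  · exact fix_chain hg hF h1 h2
  · exact Or.inl (h1.1.trans h2.1)
  · exact chain_fix hg hF h1 h2
  · exact chain_chain hg h1 h2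

end bRelLemmas

/-- The candidate projection built from an involution `g` and a fixed set `F`. -/
def buildPD (g : Fin n → Fin n) (F : Finset (Fin n)) (hg : Function.Involutive g)
    (hF : ∀ i ∈ F, g i = i) : PD n :=
  ⟨bRel g F, ⟨bRel_refl, bRel_symm hg, bRel_trans hg hF⟩⟩

section buildLemmas

variable {g : Fin n → Fin n} {F : Finset (Fin n)} (hg : Function.Involutive g)
  (hF : ∀ i ∈ F, g i = i)

theorem star_build : starPD (buildPD g F hg hF) = buildPD g F hg hF := by
  apply Setoid.ext
  rintro (i | i) (j | j) <;> exact Iff.rfl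

theorem blocks_build : BlocksAtMostTwo (buildPD g F hg hF) := by
  rintro (i | i) (j | j) (k | k) h1 h2
  · rcases h1 with rfl | ⟨e1, ne1⟩
    · exact Or.inl rfl
    · rcases h2 with rfl | ⟨e2, ne2⟩
      · exact Or.inr (Or.inl rfl)
      · exact Or.inr (Or.inr (by rw [← e1, ← e2]))
  · rcases h1 with rfl | ⟨e1, ne1⟩
    · exact Or.inl rfl
    · exact absurd (by rw [← e1, hF i h2.2]) ne1
  · rcases h2 with rfl | ⟨e2, ne2⟩
    · exact Or.inr (Or.inl rfl)
    · exact absurd (by rw [← e2, hF i h1.2]) ne2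
  · exact Or.inr (Or.inr (by rw [← h1.1, ← h2.1]))
  · exact Or.inr (Or.inr (by rw [← h1.1, ← h2.1]))
  · rcases h2 with rfl | ⟨e2, ne2⟩
    · exact Or.inr (Or.inl rfl)
    · exact absurd (by rw [← e2, hF i h1.2]) ne2
  · rcases h1 with rfl | ⟨e1, ne1⟩
    · exact Or.inl rfl
    · exact absurd (by rw [← e1, hF i h2.2]) ne1
  · rcases h1 with rfl | ⟨e1, ne1⟩
    · exact Or.inl rfl
    · rcases h2 with rfl | ⟨e2, ne2⟩
      · exact Or.inr (Or.inl rfl)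
      · exact Or.inr (Or.inr (by rw [← e1, ← e2]))

/-- Projection of the three-row vertex set back to two rows (middle row goes to the top). -/
def phiW : W n → V n := Sum.elim Sum.inl (Sum.elim Sum.inl Sum.inr)

/-- Flattening a vertex to the top row. -/
def flipV : V n → V n := Sum.elim Sum.inl Sum.inl

theorem phi_topmid (x : V n) : phiW (topmid x) = flipV x := by cases x <;> rfl

theorem phi_midbot (x : V n) : phiW (midbot x) = x := by cases x <;> rfl

theorem phi_outer (x : V n) : phiW (outer x) = x := by cases x <;> rfl

theorem flip_rel : ∀ {x y : V n}, bRel g F x y → bRel g F (flipV x) (flipV y) := by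
  rintro (i | i) (j | j) h
  · exact h
  · exact Or.inl h.1
  · exact Or.inl h.1
  · exact h

theorem comp_build : comp (buildPD g F hg hF) (buildPD g F hg hF) = buildPD g F hg hF := by
  set ε := buildPD g F hg hF with hε
  apply Setoid.ext
  intro x y
  constructor
  · intro h
    have h' : Relation.EqvGen (stepRel ε ε) (outer x) (outer y) := h
    have key : ∀ u v, Relation.EqvGen (stepRel ε ε) u v → bRel g F (phiW u) (phiW v) := by
      intro u v huv
      induction huv with
      | rel u v hst =>
        rcases hst with ⟨a, b, hab, rfl, rfl⟩ | ⟨a, b, hab, rfl, rfl⟩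
        · rw [phi_topmid, phi_topmid]
          exact flip_rel hab
        · rw [phi_midbot, phi_midbot]
          exact hab
      | refl u => exact bRel_refl (phiW u)
      | symm u v _ ih => exact bRel_symm hg ih
      | trans u v w _ _ ih1 ih2 => exact bRel_trans hg hF ih1 ih2
    have h2 := key _ _ h'
    rwa [phi_outer, phi_outer] at h2
  · intro h
    show Relation.EqvGen (stepRel ε ε) (outer x) (outer y)
    rcases x with i | i <;> rcases y with j | j
    · exact Relation.EqvGen.rel _ _ (Or.inl ⟨Sum.inl i, Sum.inl j, h, rfl, rfl⟩)
    · obtain ⟨rfl, hm⟩ := h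
      have hii : bRel g F (Sum.inl i) (Sum.inr i) := ⟨rfl, hm⟩
      exact Relation.EqvGen.trans _ _ _
        (Relation.EqvGen.rel _ _ (Or.inl ⟨Sum.inl i, Sum.inr i, hii, rfl, rfl⟩))
        (Relation.EqvGen.rel _ _ (Or.inr ⟨Sum.inl i, Sum.inr i, hii, rfl, rfl⟩))
    · obtain ⟨rfl, hm⟩ := h
      have hii : bRel g F (Sum.inl i) (Sum.inr i) := ⟨rfl, hm⟩
      exact Relation.EqvGen.symm _ _ (Relation.EqvGen.trans _ _ _
        (Relation.EqvGen.rel _ _ (Or.inl ⟨Sum.inl i, Sum.inr i, hii, rfl, rfl⟩))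
        (Relation.EqvGen.rel _ _ (Or.inr ⟨Sum.inl i, Sum.inr i, hii, rfl, rfl⟩)))
    · exact Relation.EqvGen.rel _ _ (Or.inr ⟨Sum.inr i, Sum.inr j, h, rfl, rfl⟩)

theorem rank_build : rank (buildPD g F hg hF) = F.card := by
  have hbij : Function.Bijective (fun i : {i // i ∈ F} =>
      (⟨Quotient.mk (buildPD g F hg hF) (Sum.inl i.1),
        ⟨i.1, rfl⟩, ⟨i.1, Quotient.sound ⟨rfl, i.2⟩⟩⟩ :
        {c : Quotient (buildPD g F hg hF) //
          (∃ a : Fin n, Quotient.mk (buildPD g F hg hF) (Sum.inl a) = c) ∧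
          (∃ b : Fin n, Quotient.mk (buildPD g F hg hF) (Sum.inr b) = c)})) := by
    constructor
    · intro a b hab
      have h1 : Quotient.mk (buildPD g F hg hF) (Sum.inl a.1)
          = Quotient.mk (buildPD g F hg hF) (Sum.inl b.1) := congrArg Subtype.val hab
      have h2 : bRel g F (Sum.inl a.1) (Sum.inl b.1) := Quotient.exact h1
      apply Subtype.ext
      rcases h2 with h | ⟨e, _⟩
      · exact h
      · rw [← e, hF a.1 a.2]
    · rintro ⟨c, ⟨i, hi⟩, ⟨j, hj⟩⟩
      have h2 : bRel g F (Sum.inl i) (Sum.inr j) := Quotient.exact (hi.trans hj.symm)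
      exact ⟨⟨i, h2.2⟩, Subtype.ext hi⟩
  rw [rank, ← Nat.card_eq_of_bijective _ hbij, Nat.card_eq_fintype_card]
  exact Fintype.card_coe F

end buildLemmas

open Classical in
/-- The set of upper vertices joined to their dashed partner. -/
noncomputable def FOf (α : PD n) : Finset (Fin n) :=
  Finset.univ.filter fun i => α.r (Sum.inl i) (Sum.inr i)

theorem mem_FOf {α : PD n} {i : Fin n} : i ∈ FOf α ↔ α.r (Sum.inl i) (Sum.inr i) := by
  classical
  simp [FOf]

open Classical in
/-- The involution of the upper row induced by a diagram. -/
noncomputable def gOf (α : PD n) : Fin n → Fin n := fun i =>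
  if h : ∃ j, α.r (Sum.inl i) (Sum.inl j) ∧ j ≠ i then h.choose else i

section converse

variable {α : PD n}

theorem partner_uniq (hB : BlocksAtMostTwo α) {i j k : Fin n}
    (h1 : α.r (Sum.inl i) (Sum.inl j)) (hj : j ≠ i)
    (h2 : α.r (Sum.inl i) (Sum.inl k)) (hk : k ≠ i) : j = k := by
  rcases hB _ _ _ h1 h2 with h | h | h
  · exact absurd (Sum.inl.inj h).symm hj
  · exact absurd (Sum.inl.inj h).symm hk
  · exact Sum.inl.inj h

theorem gOf_partner (hB : BlocksAtMostTwo α) {i j : Fin n}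
    (h : α.r (Sum.inl i) (Sum.inl j)) (hne : j ≠ i) : gOf α i = j := by
  classical
  have hex : ∃ j, α.r (Sum.inl i) (Sum.inl j) ∧ j ≠ i := ⟨j, h, hne⟩
  rw [gOf, dif_pos hex]
  exact partner_uniq hB hex.choose_spec.1 hex.choose_spec.2 h hne

theorem gOf_self {i : Fin n} (h : ∀ j, α.r (Sum.inl i) (Sum.inl j) → j = i) :
    gOf α i = i := by
  classical
  rw [gOf, dif_neg]
  rintro ⟨j, hj, hne⟩
  exact hne (h j hj)

theorem gOf_spec (α : PD n) (i : Fin n) :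
    gOf α i = i ∨ (α.r (Sum.inl i) (Sum.inl (gOf α i)) ∧ gOf α i ≠ i) := by
  classical
  by_cases hex : ∃ j, α.r (Sum.inl i) (Sum.inl j) ∧ j ≠ i
  · right
    rw [gOf, dif_pos hex]
    exact hex.choose_spec
  · left
    rw [gOf, dif_neg hex]

theorem gOf_involutive (hB : BlocksAtMostTwo α) : Function.Involutive (gOf α) := by
  intro i
  rcases gOf_spec α i with h | ⟨hr, hne⟩
  · rw [h, h]
  · exact gOf_partner hB (α.iseqv.symm hr) (fun e => hne e.symm)

theorem FOf_fix (hB : BlocksAtMostTwo α) : ∀ i ∈ FOf α, gOf α i = i := by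
  intro i hi
  rw [mem_FOf] at hi
  apply gOf_self
  intro j hj
  rcases hB _ _ _ hj hi with h | h | h
  · exact (Sum.inl.inj h).symm
  · exact absurd h (by simp)
  · exact absurd h (by simp)

theorem star_iff (hS : starPD α = α) (x y : V n) :
    α.r (Sum.elim Sum.inr Sum.inl x) (Sum.elim Sum.inr Sum.inl y) ↔ α.r x y := by
  conv_rhs => rw [← hS]
  exact Iff.rfl

theorem proj_transversal (hB : BlocksAtMostTwo α) (hC : comp α α = α)
    (hS : starPD α = α) {i j : Fin n} (h : α.r (Sum.inl i) (Sum.inr j)) : i = j := by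
  by_contra hne
  have hji : α.r (Sum.inl j) (Sum.inr i) :=
    α.iseqv.symm ((star_iff hS (Sum.inl i) (Sum.inr j)).mpr h)
  have bl_li : ∀ z, α.r (Sum.inl i) z → z = Sum.inl i ∨ z = Sum.inr j := by
    intro z hz
    rcases hB _ _ _ h hz with h' | h' | h'
    · exact absurd h' (by simp)
    · exact Or.inl h'.symm
    · exact Or.inr h'.symm
  have bl_rj : ∀ z, α.r (Sum.inr j) z → z = Sum.inr j ∨ z = Sum.inl i := by
    intro z hz
    rcases hB _ _ _ (α.iseqv.symm h) hz with h' | h' | h'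
    · exact absurd h' (by simp)
    · exact Or.inl h'.symm
    · exact Or.inr h'.symm
  have bl_lj : ∀ z, α.r (Sum.inl j) z → z = Sum.inl j ∨ z = Sum.inr i := by
    intro z hz
    rcases hB _ _ _ hji hz with h' | h' | h'
    · exact absurd h' (by simp)
    · exact Or.inl h'.symm
    · exact Or.inr h'.symm
  have bl_ri : ∀ z, α.r (Sum.inr i) z → z = Sum.inr i ∨ z = Sum.inl j := by
    intro z hz
    rcases hB _ _ _ (α.iseqv.symm hji) hz with h' | h' | h'
    · exact absurd h' (by simp)
    · exact Or.inl h'.symm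
    · exact Or.inr h'.symm
  set S : W n → Prop := fun u =>
    u = Sum.inl i ∨ u = Sum.inr (Sum.inl j) ∨ u = Sum.inr (Sum.inr i) with hSdef
  have step_cl : ∀ u v, stepRel α α u v → S u → S v := by
    rintro u v (⟨a, b, hab, rfl, rfl⟩ | ⟨a, b, hab, rfl, rfl⟩) hu
    · rcases hu with h' | h' | h'
      · have ha : a = Sum.inl i := by
          rcases a with a' | a'
          · simp only [topmid, Sum.elim_inl, Sum.inl.injEq] at h'
            rw [h']
          · simp [topmid] at h'
        subst ha
        rcases bl_li b hab with rfl | rfl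
        · exact Or.inl rfl
        · exact Or.inr (Or.inl rfl)
      · have ha : a = Sum.inr j := by
          rcases a with a' | a'
          · simp [topmid] at h'
          · simp only [topmid, Sum.elim_inr, Sum.inr.injEq, Sum.inl.injEq] at h'
            rw [h']
        subst ha
        rcases bl_rj b hab with rfl | rfl
        · exact Or.inr (Or.inl rfl)
        · exact Or.inl rfl
      · exfalso
        rcases a with a' | a' <;> simp [topmid] at h'
    · rcases hu with h' | h' | h'
      · exfalso
        rcases a with a' | a' <;> simp [midbot] at h'
      · have ha : a = Sum.inl j := by
          rcases a with a' | a'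
          · simp only [midbot, Sum.elim_inl, Sum.inr.injEq, Sum.inl.injEq] at h'
            rw [h']
          · simp [midbot] at h'
        subst ha
        rcases bl_lj b hab with rfl | rfl
        · exact Or.inr (Or.inl rfl)
        · exact Or.inr (Or.inr rfl)
      · have ha : a = Sum.inr i := by
          rcases a with a' | a'
          · simp [midbot] at h'
          · simp only [midbot, Sum.elim_inr, Sum.inr.injEq] at h'
            rw [h']
        subst ha
        rcases bl_ri b hab with rfl | rfl
        · exact Or.inr (Or.inr rfl)
        · exact Or.inr (Or.inl rfl)
  have step_sym : ∀ u v, stepRel α α u v → stepRel α α v u := by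
    rintro u v (⟨a, b, hab, rfl, rfl⟩ | ⟨a, b, hab, rfl, rfl⟩)
    · exact Or.inl ⟨b, a, α.iseqv.symm hab, rfl, rfl⟩
    · exact Or.inr ⟨b, a, α.iseqv.symm hab, rfl, rfl⟩
  have inv : ∀ u v, Relation.EqvGen (stepRel α α) u v → (S u ↔ S v) := by
    intro u v huv
    induction huv with
    | rel u v hst => exact ⟨step_cl _ _ hst, step_cl _ _ (step_sym _ _ hst)⟩
    | refl u => exact Iff.rfl
    | symm u v _ ih => exact ih.symm
    | trans u v w _ _ ih1 ih2 => exact ih1.trans ih2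
  have hcc : (comp α α).r (Sum.inl i) (Sum.inr j) := by rw [hC]; exact h
  have hE : Relation.EqvGen (stepRel α α) (outer (Sum.inl i)) (outer (Sum.inr j)) := hcc
  have hSj : S (Sum.inr (Sum.inr j)) := (inv _ _ hE).mp (Or.inl rfl)
  rcases hSj with h' | h' | h'
  · exact absurd h' (by simp)
  · exact absurd h' (by simp)
  · exact hne (by simpa using h'.symm)

theorem build_eq (hB : BlocksAtMostTwo α) (hC : comp α α = α) (hS : starPD α = α) :
    buildPD (gOf α) (FOf α) (gOf_involutive hB) (FOf_fix hB) = α := by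
  have upper : ∀ i j : Fin n,
      bRel (gOf α) (FOf α) (Sum.inl i) (Sum.inl j) ↔ α.r (Sum.inl i) (Sum.inl j) := by
    intro i j
    constructor
    · rintro (rfl | ⟨e, ne⟩)
      · exact α.iseqv.refl _
      · subst e
        rcases gOf_spec α i with h | ⟨hr, _⟩
        · exact absurd h.symm ne
        · exact hr
    · intro hr
      by_cases hij : i = j
      · exact Or.inl hij
      · exact Or.inr ⟨gOf_partner hB hr (fun e => hij e.symm), hij⟩
  have low : ∀ i j : Fin n, α.r (Sum.inr i) (Sum.inr j) ↔ α.r (Sum.inl i) (Sum.inl j) :=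
    fun i j => star_iff hS (Sum.inl i) (Sum.inl j)
  apply Setoid.ext
  rintro (i | i) (j | j)
  · exact upper i j
  · constructor
    · rintro ⟨rfl, hm⟩
      exact mem_FOf.mp hm
    · intro hr
      obtain rfl := proj_transversal hB hC hS hr
      exact ⟨rfl, mem_FOf.mpr hr⟩
  · constructor
    · rintro ⟨rfl, hm⟩
      exact α.iseqv.symm (mem_FOf.mp hm)
    · intro hr
      obtain rfl := proj_transversal hB hC hS (α.iseqv.symm hr)
      exact ⟨rfl, mem_FOf.mpr (α.iseqv.symm hr)⟩
  · exact (upper i j).trans (low i j).symm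

end converse
def InvFun (X : Type*) : Type _ := {f : X → X // Function.Involutive f}

instance (X : Type*) [Finite X] : Finite (InvFun X) := by
  unfold InvFun; infer_instance

def permInvEquiv (X : Type*) : {f : Equiv.Perm X // ∀ x, f (f x) = x} ≃ InvFun X where
  toFun f := ⟨⇑f.1, f.2⟩
  invFun f := ⟨Function.Involutive.toPerm f.1 f.2, f.2⟩
  left_inv f := Subtype.ext (Equiv.ext fun x => rfl)
  right_inv f := Subtype.ext rfl

theorem involNum_eq (k : ℕ) : involNum k = Nat.card (InvFun (Fin k)) :=
  Nat.card_congr (permInvEquiv _)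

def invCongr {X Y : Type*} (e : X ≃ Y) : InvFun X ≃ InvFun Y where
  toFun f := ⟨e ∘ f.1 ∘ e.symm, fun y => by simp [f.2 (e.symm y)]⟩
  invFun f := ⟨e.symm ∘ f.1 ∘ e, fun x => by simp [f.2 (e x)]⟩
  left_inv f := Subtype.ext (funext fun x => by simp)
  right_inv f := Subtype.ext (funext fun x => by simp)

theorem natCard_sigma {ι : Type*} [Fintype ι] (B : ι → Type*) [∀ i, Finite (B i)] :
    Nat.card (Σ i, B i) = ∑ i, Nat.card (B i) := by
  classical
  letI : ∀ i, Fintype (B i) := fun i => Fintype.ofFinite _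
  rw [Nat.card_eq_fintype_card, Fintype.card_sigma]
  simp [Nat.card_eq_fintype_card]

/-- splitting off the fixed part of an involution -/
def fixEquiv {X : Type*} [DecidableEq X] (F : Finset X) :
    {g : X → X // Function.Involutive g ∧ ∀ i ∈ F, g i = i} ≃ InvFun {x : X // x ∉ F} where
  toFun g := ⟨fun x => ⟨g.1 x.1, by
      intro hmem
      have h1 : g.1 (g.1 x.1) = g.1 x.1 := g.2.2 _ hmem
      rw [g.2.1 x.1] at h1
      exact x.2 (h1 ▸ hmem)⟩,
    fun x => Subtype.ext (g.2.1 x.1)⟩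
  invFun f := ⟨fun x => if hx : x ∈ F then x else (f.1 ⟨x, hx⟩).1, by
    constructor
    · intro x
      by_cases hx : x ∈ F
      · simp [hx]
      · simp only [dif_neg hx, dif_neg (f.1 ⟨x, hx⟩).2]
        exact congrArg Subtype.val (f.2 ⟨x, hx⟩)
    · intro i hi; simp [hi]⟩
  left_inv g := by
    apply Subtype.ext
    funext x
    by_cases hx : x ∈ F
    · simp only [dif_pos hx]; exact (g.2.2 x hx).symm
    · simp only [dif_neg hx]
  right_inv f := by
    apply Subtype.ext
    funext x
    simp only [dif_neg x.2]

theorem card_inv_fix {X : Type*} [Fintype X] [DecidableEq X] (F : Finset X) :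
    Nat.card {g : X → X // Function.Involutive g ∧ ∀ i ∈ F, g i = i}
      = Nat.card (InvFun (Fin (Fintype.card X - F.card))) := by
  classical
  refine Nat.card_congr ((fixEquiv F).trans (invCongr (Fintype.equivFinOfCardEq ?_)))
  rw [Fintype.card_subtype_compl]
  congr 1
  exact Fintype.card_coe F

/-- the non-fixed-point part of the recurrence -/
def Yt (X : Type*) : Type _ :=
  {p : X × (X → X) // Function.Involutive p.2 ∧ p.2 p.1 = p.1}

instance (X : Type*) [Finite X] : Finite (Yt X) := by
  unfold Yt; infer_instance

def Phi {X : Type*} [DecidableEq X] : InvFun X ⊕ Yt X → InvFun (Option X)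
  | Sum.inl g => ⟨Option.map g.1, fun o => by cases o <;> simp [g.2 _]⟩
  | Sum.inr y => ⟨fun o => o.elim (some y.1.1)
      (fun x => if x = y.1.1 then none else some (y.1.2 x)), by
      rintro (_ | x)
      · simp
      · by_cases hx : x = y.1.1
        · simp [hx]
        · have hgx : y.1.2 x ≠ y.1.1 := by
            intro h
            apply hx
            have := congrArg y.1.2 h
            rwa [y.2.1 x, y.2.2] at this
          simp [Option.elim, hx, hgx, y.2.1 x]⟩

theorem Phi_bijective {X : Type*} [DecidableEq X] : Function.Bijective (Phi (X := X)) := by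
  constructor
  · rintro (g | y) (g' | y') h
    · have h' := congrArg Subtype.val h
      simp only [Phi] at h'
      congr 1
      apply Subtype.ext
      funext x
      have := congrFun h' (some x)
      simpa using this
    · have h' := congrArg Subtype.val h
      have := congrFun (by simpa [Phi] using h') none
      simp at this
    · have h' := congrArg Subtype.val h
      have := congrFun (by simpa [Phi] using h') none
      simp at this
    · have h' := congrArg Subtype.val h
      simp only [Phi] at h'
      obtain ⟨⟨a, g⟩, hg1, hg2⟩ := y
      obtain ⟨⟨a', g'⟩, hg1', hg2'⟩ := y'
      simp only at h' hg2 hg2' ⊢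
      have hnone := congrFun h' none
      simp only [Option.elim] at hnone
      have ha : a = a' := by simpa using hnone
      subst ha
      congr 1
      apply Subtype.ext
      apply Prod.ext
      · rfl
      · funext x
        show g x = g' x
        have hx := congrFun h' (some x)
        simp only [Option.elim] at hx
        by_cases hxa : x = a
        · subst hxa
          rw [hg2, hg2']
        · rw [if_neg hxa, if_neg hxa] at hx
          simpa using hx
  · intro f
    cases hnone : f.1 none with
    | none =>
      have hsome : ∀ x, f.1 (some x) = some ((f.1 (some x)).getD x) := by
        intro x
        cases hx : f.1 (some x) with
        | none =>
          exfalso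
          have := f.2 (some x)
          rw [hx, hnone] at this
          exact Option.some_ne_none _ this.symm
        | some y => rfl
      refine ⟨Sum.inl ⟨fun x => (f.1 (some x)).getD x, ?_⟩, ?_⟩
      · intro x
        have h2 := f.2 (some x)
        rw [hsome x, hsome ((f.1 (some x)).getD x)] at h2
        exact Option.some.inj h2
      · apply Subtype.ext
        funext o
        cases o with
        | none => simp [Phi, hnone]
        | some x => simp [Phi, (hsome x).symm]
    | some a =>
      have hfa : f.1 (some a) = none := by
        have := f.2 none
        rwa [hnone] at this
      have hsome : ∀ x, x ≠ a → f.1 (some x) = some ((f.1 (some x)).getD x) ∧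
          (f.1 (some x)).getD x ≠ a := by
        intro x hx
        cases hfx : f.1 (some x) with
        | none =>
          exfalso
          have := f.2 (some x)
          rw [hfx, hnone] at this
          exact hx (Option.some.inj this).symm
        | some y =>
          refine ⟨rfl, ?_⟩
          intro hy
          simp only [Option.getD_some] at hy
          subst hy
          have := f.2 (some x)
          rw [hfx, hfa] at this
          exact Option.some_ne_none _ this.symm
      set g : X → X := fun x => if x = a then a else (f.1 (some x)).getD x with hg
      have hginv : Function.Involutive g := by
        intro x
        by_cases hx : x = a
        · simp [hg, hx]
        · obtain ⟨h1, h2⟩ := hsome x hx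
          simp only [hg, if_neg hx, if_neg h2]
          have h3 := f.2 (some x)
          rw [h1] at h3
          obtain ⟨h1', _⟩ := hsome _ h2
          rw [h1'] at h3
          exact Option.some.inj h3
      refine ⟨Sum.inr ⟨(a, g), hginv, by simp [hg]⟩, ?_⟩
      apply Subtype.ext
      funext o
      cases o with
      | none => simp [Phi, hnone]
      | some x =>
        by_cases hx : x = a
        · subst hx
          simp [Phi, hfa]
        · simp only [Phi, if_neg hx]
          rw [(hsome x hx).1]
          simp [hg, if_neg hx]

def sigmaYt {X : Type*} : Yt X ≃ Σ a : X, {g : X → X // Function.Involutive g ∧ g a = a} where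
  toFun y := ⟨y.1.1, y.1.2, y.2⟩
  invFun s := ⟨(s.1, s.2.1), s.2.2⟩
  left_inv y := rfl
  right_inv s := rfl

theorem card_Yt (m : ℕ) : Nat.card (Yt (Fin (m + 1))) = (m + 1) * Nat.card (InvFun (Fin m)) := by
  rw [Nat.card_congr (sigmaYt (X := Fin (m+1))), natCard_sigma]
  have : ∀ a : Fin (m+1),
      Nat.card {g : Fin (m+1) → Fin (m+1) // Function.Involutive g ∧ g a = a}
        = Nat.card (InvFun (Fin m)) := by
    intro a
    have h1 : Nat.card {g : Fin (m+1) → Fin (m+1) // Function.Involutive g ∧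
        ∀ i ∈ ({a} : Finset (Fin (m+1))), g i = i} = Nat.card (InvFun (Fin m)) := by
      rw [card_inv_fix]
      congr 2
      simp
    rw [← h1]
    apply Nat.card_congr
    apply Equiv.subtypeEquivRight
    intro g
    simp
  simp only [this, Finset.sum_const, Finset.card_univ, Fintype.card_fin, smul_eq_mul]

theorem involNum_rec (m : ℕ) : involNum (m + 2) = involNum (m + 1) + (m + 1) * involNum m := by
  rw [involNum_eq, involNum_eq, involNum_eq]
  have e1 : InvFun (Fin (m + 2)) ≃ InvFun (Option (Fin (m + 1))) := invCongr (finSuccEquiv (m+1))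
  rw [Nat.card_congr e1, ← Nat.card_eq_of_bijective _ (Phi_bijective (X := Fin (m+1))),
    Nat.card_sum, card_Yt]

theorem involNum_zero : involNum 0 = 1 := by
  rw [involNum_eq]
  haveI : Unique (InvFun (Fin 0)) :=
    ⟨⟨⟨id, fun x => rfl⟩⟩, fun f => Subtype.ext (funext fun x => x.elim0)⟩
  exact Nat.card_unique

theorem involNum_one : involNum 1 = 1 := by
  rw [involNum_eq]
  haveI : Unique (InvFun (Fin 1)) :=
    ⟨⟨⟨id, fun x => rfl⟩⟩, fun f => Subtype.ext (funext fun x => Subsingleton.elim _ _)⟩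
  exact Nat.card_unique



/-- The parameter type for projections of rank at most 2. -/
def Tt (n : ℕ) : Type :=
  {p : (Fin n → Fin n) × Finset (Fin n) //
    Function.Involutive p.1 ∧ (∀ i ∈ p.2, p.1 i = i) ∧ p.2.card ≤ 2}

instance (n : ℕ) : Finite (Tt n) := by unfold Tt; infer_instance

def TtSigma (n : ℕ) : Tt n ≃
    Σ F : {F : Finset (Fin n) // F.card ≤ 2},
      {g : Fin n → Fin n // Function.Involutive g ∧ ∀ i ∈ F.1, g i = i} where
  toFun p := ⟨⟨p.1.2, p.2.2.2⟩, ⟨p.1.1, p.2.1, p.2.2.1⟩⟩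
  invFun s := ⟨(s.2.1, s.1.1), s.2.2.1, s.2.2.2, s.1.2⟩
  left_inv p := rfl
  right_inv s := rfl

theorem card_Tt (n : ℕ) :
    Nat.card (Tt n) = ∑ k ∈ Finset.range 3, n.choose k * involNum (n - k) := by
  classical
  rw [Nat.card_congr (TtSigma n), natCard_sigma]
  have hterm : ∀ F : {F : Finset (Fin n) // F.card ≤ 2},
      Nat.card {g : Fin n → Fin n // Function.Involutive g ∧ ∀ i ∈ F.1, g i = i}
        = involNum (n - F.1.card) := by
    intro F
    rw [card_inv_fix, involNum_eq]
    congr 2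
    rw [Fintype.card_fin]
  simp only [hterm]
  rw [← Finset.sum_subtype (Finset.univ.filter (fun F : Finset (Fin n) => F.card ≤ 2))
      (by intro x; simp) (fun F => involNum (n - F.card))]
  have hmaps : ∀ F ∈ Finset.univ.filter (fun F : Finset (Fin n) => F.card ≤ 2),
      F.card ∈ Finset.range 3 := by
    intro F hF
    simp only [Finset.mem_filter] at hF
    simp [Nat.lt_succ_iff, hF.2]
  rw [← Finset.sum_fiberwise_of_maps_to hmaps (fun F => involNum (n - F.card))]
  apply Finset.sum_congr rfl
  intro k hk
  rw [Finset.mem_range] at hk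
  have hset : ((Finset.univ.filter (fun F : Finset (Fin n) => F.card ≤ 2)).filter
      (fun F => F.card = k)) = Finset.powersetCard k Finset.univ := by
    ext F
    simp only [Finset.mem_filter, Finset.mem_univ, true_and, Finset.mem_powersetCard_univ]
    constructor
    · rintro ⟨_, h⟩; exact h
    · rintro h; omega
  rw [hset]
  have hcongr : ∀ F ∈ Finset.powersetCard k (Finset.univ : Finset (Fin n)),
      involNum (n - F.card) = involNum (n - k) := by
    intro F hF
    rw [Finset.mem_powersetCard_univ] at hF
    rw [hF]
  rw [Finset.sum_congr rfl hcongr, Finset.sum_const, Finset.card_powersetCard,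
    Finset.card_univ, Fintype.card_fin, smul_eq_mul]

theorem two_mul_choose_two : ∀ m : ℕ, 2 * ((m + 2).choose 2) = (m + 2) * (m + 1)
  | 0 => rfl
  | (m + 1) => by
    have h := two_mul_choose_two m
    rw [Nat.choose_succ_succ (m + 2) 1, Nat.choose_one_right]
    ring_nf
    ring_nf at h
    omega

theorem main_count (n : ℕ) : 2 * Nat.card (Tt n) = involNum (n + 2) := by
  rw [card_Tt]
  rw [Finset.sum_range_succ, Finset.sum_range_succ, Finset.sum_range_one]
  rw [Nat.choose_zero_right, Nat.choose_one_right]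
  match n with
  | 0 =>
    simp [involNum_rec, involNum_zero, involNum_one]
  | 1 =>
    rw [show (1:ℕ) + 2 = 0 + 1 + 2 by rfl, involNum_rec, involNum_rec]
    simp [involNum_zero, involNum_one]
  | (m + 2) =>
    have e2 : m + 2 - 2 = m := by omega
    have e1 : m + 2 - 1 = m + 1 := by omega
    have e0 : m + 2 - 0 = m + 2 := by omega
    rw [e0, e1, e2]
    have r4 : involNum (m + 2 + 2) = involNum (m + 3) + (m + 3) * involNum (m + 2) := by
      rw [show m + 2 + 2 = m + 2 + 2 by rfl]
      exact involNum_rec (m + 2)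
    have r3 : involNum (m + 3) = involNum (m + 2) + (m + 2) * involNum (m + 1) :=
      involNum_rec (m + 1)
    have r2 : involNum (m + 2) = involNum (m + 1) + (m + 1) * involNum m :=
      involNum_rec m
    have hc := two_mul_choose_two m
    have expand : 2 * (1 * involNum (m + 2) + (m + 2) * involNum (m + 1)
        + (m + 2).choose 2 * involNum m)
        = 2 * involNum (m + 2) + 2 * (m + 2) * involNum (m + 1)
          + (2 * ((m + 2).choose 2)) * involNum m := by ring
    rw [expand, hc, r4, r3, r2]
    ring


theorem card_proj (n : ℕ) :
    Nat.card {α : PD n // BlocksAtMostTwo α ∧ IsProjection α ∧ rank α ≤ 2}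
      = Nat.card (Tt n) := by
  symm
  apply Nat.card_eq_of_bijective (fun p : Tt n =>
    (⟨buildPD p.1.1 p.1.2 p.2.1 p.2.2.1,
      blocks_build p.2.1 p.2.2.1,
      ⟨comp_build p.2.1 p.2.2.1, star_build p.2.1 p.2.2.1⟩, by
        rw [rank_build p.2.1 p.2.2.1]; exact p.2.2.2⟩ :
      {α : PD n // BlocksAtMostTwo α ∧ IsProjection α ∧ rank α ≤ 2}))
  constructor
  · intro p q h
    have e : buildPD p.1.1 p.1.2 p.2.1 p.2.2.1 = buildPD q.1.1 q.1.2 q.2.1 q.2.2.1 :=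
      congrArg Subtype.val h
    have hrel : ∀ x y : V n, bRel p.1.1 p.1.2 x y ↔ bRel q.1.1 q.1.2 x y := by
      intro x y
      exact Setoid.ext_iff.mp e x y
    apply Subtype.ext
    apply Prod.ext
    · funext i
      by_cases h1 : p.1.1 i = i
      · by_cases h2 : q.1.1 i = i
        · rw [h1, h2]
        · rcases (hrel (Sum.inl i) (Sum.inl (q.1.1 i))).mpr
            (Or.inr ⟨rfl, fun e' => h2 e'.symm⟩) with h' | ⟨h', _⟩
          · exact absurd h'.symm h2
          · exact h'
      · rcases (hrel (Sum.inl i) (Sum.inl (p.1.1 i))).mp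
          (Or.inr ⟨rfl, fun e' => h1 e'.symm⟩) with h' | ⟨h', _⟩
        · exact absurd h'.symm h1
        · exact h'.symm
    · ext i
      have h2 := hrel (Sum.inl i) (Sum.inr i)
      constructor
      · intro hi
        exact ((h2.mp ⟨rfl, hi⟩).2)
      · intro hi
        exact ((h2.mpr ⟨rfl, hi⟩).2)
  · rintro ⟨α, hB, ⟨hC, hS⟩, hr⟩
    refine ⟨⟨(gOf α, FOf α), gOf_involutive hB, FOf_fix hB, ?_⟩, ?_⟩
    · have hrk := rank_build (gOf_involutive hB) (FOf_fix hB)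
      rw [build_eq hB hC hS] at hrk
      rw [← hrk]
      exact hr
    · exact Subtype.ext (build_eq hB hC hS)

/-- For `n ≥ 0`, the number of projections of the partial Brauer monoid
`𝒫ℬ_n` of rank at most `2` equals `I(n+2)/2`, where `I` is the involution sequence. -/
theorem statement16 (n : ℕ) :
    2 * Nat.card {α : PD n // BlocksAtMostTwo α ∧ IsProjection α ∧ rank α ≤ 2}
      = involNum (n + 2) := by
  rw [card_proj]
  exact main_count n

end DiagramDeg
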